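/- Let (X,d) be a countable discrete metric space with bounded geometry. Suppose there exists a sequence of transition probabilities φ_n on X such that for every n there is R_n>0 with Supp(φ_n(x,·)) ⊆ B(x,R_n) for all x ∈ X, and such that for every K>0, lim_{n→∞} sup_{x,y ∈ X, d(x,y)<K} ‖φ_n(x,·) − φ_n(y,·)‖₁ = 0. Then there exists a transition probability P on X such that: (1) for every δ>0 there is R_δ>0 with ∑_{y ∈ B(x,R_δ)} P(x,y) > 1−δ for all x ∈ X; and (2) for every K>0, lim_{n→∞} sup_{x,y ∈ X, d(x,y)<K} ‖P^n(x,·) − P^n(y,·)‖₁ = 0. -/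

import Mathlib

set_option maxHeartbeats 1000000

noncomputable def l1dist {X : Type*} (μ ν : X → ℝ) : ℝ := ∑' y, |μ y - ν y|

def IsProb {X : Type*} (μ : X → ℝ) : Prop := (∀ x, 0 ≤ μ x) ∧ HasSum μ 1

def IsTransProb {X : Type*} (P : X → X → ℝ) : Prop := ∀ x, IsProb (P x)

noncomputable def mconv {X : Type*} (μ : X → ℝ) (φ : X → X → ℝ) : X → ℝ :=
  fun y => ∑' x, μ x * φ x y

noncomputable def kpow {X : Type*} [DecidableEq X] (P : X → X → ℝ) : ℕ → X → X → ℝ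
  | 0 => fun x y => if x = y then 1 else 0
  | n + 1 => fun x y => ∑' z, kpow P n x z * P z y

section Aux

variable {X Y : Type*}

lemma isProb_summable {μ : X → ℝ} (h : IsProb μ) : Summable μ := h.2.summable

lemma isProb_tsum {μ : X → ℝ} (h : IsProb μ) : ∑' y, μ y = 1 := h.2.tsum_eq

lemma isProb_le_one {μ : X → ℝ} (h : IsProb μ) (x : X) : μ x ≤ 1 :=
  le_hasSum h.2 x fun y _ => h.1 y

lemma summable_uncurry_of_nonneg {f : X → Y → ℝ} (h0 : ∀ a b, 0 ≤ f a b)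
    (h1 : ∀ a, Summable (f a)) (h2 : Summable fun a => ∑' b, f a b) :
    Summable (Function.uncurry f) :=
  (summable_prod_of_nonneg (fun p => h0 p.1 p.2)).mpr ⟨h1, h2⟩

lemma summable_snd_of_nonneg {f : X → Y → ℝ} (h0 : ∀ a b, 0 ≤ f a b)
    (h1 : ∀ a, Summable (f a)) (h2 : Summable fun a => ∑' b, f a b) :
    Summable fun b => ∑' a, f a b :=
  (summable_uncurry_of_nonneg h0 h1 h2).prod_symm.prod

lemma tsum_comm_nonneg {f : X → Y → ℝ} (h0 : ∀ a b, 0 ≤ f a b)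
    (h1 : ∀ a, Summable (f a)) (h2 : Summable fun a => ∑' b, f a b) :
    ∑' b, ∑' a, f a b = ∑' a, ∑' b, f a b :=
  Summable.tsum_comm' (summable_uncurry_of_nonneg h0 h1 h2) h1
    (fun b => (summable_uncurry_of_nonneg h0 h1 h2).prod_symm.prod_factor b)

end Aux
section Aux2
variable {X Y ι : Type*}


-- mix is a probability
lemma mix_isProb {w : ι → ℝ} {a : ι → X → ℝ} (hw0 : ∀ k, 0 ≤ w k) (hw : HasSum w 1)
    (ha : ∀ k, IsProb (a k)) : IsProb (fun y => ∑' k, w k * a k y) := by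
  have h0 : ∀ k y, 0 ≤ w k * a k y := fun k y => mul_nonneg (hw0 k) ((ha k).1 y)
  have h1 : ∀ k, Summable fun y => w k * a k y := fun k => (ha k).2.summable.mul_left _
  have h2 : Summable fun k => ∑' y, w k * a k y := by
    have : (fun k => ∑' y, w k * a k y) = w := by
      funext k; rw [tsum_mul_left, (ha k).2.tsum_eq, mul_one]
    rw [this]; exact hw.summable
  constructor
  · intro y; exact tsum_nonneg fun k => h0 k y
  · have hs : Summable fun y => ∑' k, w k * a k y := summable_snd_of_nonneg h0 h1 h2
    refine hs.hasSum_iff.mpr ?_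
    rw [tsum_comm_nonneg h0 h1 h2]
    have : ∀ k, ∑' y, w k * a k y = w k := by
      intro k; rw [tsum_mul_left, (ha k).2.tsum_eq, mul_one]
    rw [tsum_congr this, hw.tsum_eq]

lemma mconv_isProb {μ : X → ℝ} {F : X → X → ℝ} (hμ : IsProb μ) (hF : ∀ z, IsProb (F z)) :
    IsProb (mconv μ F) :=
  mix_isProb hμ.1 hμ.2 hF

lemma summable_abs_sub {μ ν : X → ℝ} (hμ : IsProb μ) (hν : IsProb ν) :
    Summable fun y => |μ y - ν y| := by
  refine Summable.of_nonneg_of_le (fun y => abs_nonneg _) (fun y => ?_)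
    (hμ.2.summable.add hν.2.summable)
  calc |μ y - ν y| ≤ |μ y| + |ν y| := abs_sub _ _
  _ = μ y + ν y := by rw [abs_of_nonneg (hμ.1 y), abs_of_nonneg (hν.1 y)]

lemma abs_sub_le_add {μ ν : X → ℝ} (hμ : IsProb μ) (hν : IsProb ν) (y : X) :
    |μ y - ν y| ≤ μ y + ν y := by
  calc |μ y - ν y| ≤ |μ y| + |ν y| := abs_sub _ _
  _ = μ y + ν y := by rw [abs_of_nonneg (hμ.1 y), abs_of_nonneg (hν.1 y)]

lemma l1dist_nonneg {μ ν : X → ℝ} : 0 ≤ l1dist μ ν :=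
  tsum_nonneg fun _ => abs_nonneg _

lemma l1dist_comm (μ ν : X → ℝ) : l1dist μ ν = l1dist ν μ := by
  unfold l1dist; exact tsum_congr fun y => abs_sub_comm _ _

lemma l1dist_le_two {μ ν : X → ℝ} (hμ : IsProb μ) (hν : IsProb ν) : l1dist μ ν ≤ 2 := by
  have : l1dist μ ν ≤ ∑' y, (μ y + ν y) :=
    Summable.tsum_le_tsum (abs_sub_le_add hμ hν) (summable_abs_sub hμ hν)
      (hμ.2.summable.add hν.2.summable)
  calc l1dist μ ν ≤ ∑' y, (μ y + ν y) := this
  _ = 1 + 1 := by rw [Summable.tsum_add hμ.2.summable hν.2.summable, hμ.2.tsum_eq, hν.2.tsum_eq]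
  _ = 2 := by norm_num

end Aux2
section Aux3
variable {X Y ι : Type*}

lemma l1dist_mix_le {w : ι → ℝ} {a b : ι → X → ℝ} (hw0 : ∀ k, 0 ≤ w k) (hw : HasSum w 1)
    (ha : ∀ k, IsProb (a k)) (hb : ∀ k, IsProb (b k)) :
    l1dist (fun y => ∑' k, w k * a k y) (fun y => ∑' k, w k * b k y)
      ≤ ∑' k, w k * l1dist (a k) (b k) := by
  set g : ι → X → ℝ := fun k y => w k * |a k y - b k y| with hg
  have h0 : ∀ k y, 0 ≤ g k y := fun k y => mul_nonneg (hw0 k) (abs_nonneg _)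
  have h1 : ∀ k, Summable (g k) := fun k => (summable_abs_sub (ha k) (hb k)).mul_left _
  have h1' : ∀ k, ∑' y, g k y = w k * l1dist (a k) (b k) := fun k => tsum_mul_left
  have h2 : Summable fun k => ∑' y, g k y := by
    refine Summable.of_nonneg_of_le (fun k => tsum_nonneg (h0 k)) (fun k => ?_)
      (hw.summable.mul_right 2)
    rw [h1' k]
    exact mul_le_mul_of_nonneg_left (l1dist_le_two (ha k) (hb k)) (hw0 k)
  have h1k : ∀ y, Summable fun k => g k y := by
    intro y
    refine Summable.of_nonneg_of_le (fun k => h0 k y) (fun k => ?_) (hw.summable.mul_right 2)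
    exact mul_le_mul_of_nonneg_left (by
      calc |a k y - b k y| ≤ a k y + b k y := abs_sub_le_add (ha k) (hb k) y
      _ ≤ 1 + 1 := add_le_add (isProb_le_one (ha k) y) (isProb_le_one (hb k) y)
      _ = 2 := by norm_num) (hw0 k)
  have hsuma : ∀ y, Summable fun k => w k * a k y := by
    intro y
    refine Summable.of_nonneg_of_le (fun k => mul_nonneg (hw0 k) ((ha k).1 y))
      (fun k => ?_) hw.summable
    exact mul_le_of_le_one_right (hw0 k) (isProb_le_one (ha k) y)
  have hsumb : ∀ y, Summable fun k => w k * b k y := by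
    intro y
    refine Summable.of_nonneg_of_le (fun k => mul_nonneg (hw0 k) ((hb k).1 y))
      (fun k => ?_) hw.summable
    exact mul_le_of_le_one_right (hw0 k) (isProb_le_one (hb k) y)
  have habs : ∀ y, |(∑' k, w k * a k y) - ∑' k, w k * b k y| ≤ ∑' k, g k y := by
    intro y
    rw [← Summable.tsum_sub (hsuma y) (hsumb y)]
    have hcong : ∀ k, w k * a k y - w k * b k y = w k * (a k y - b k y) := fun k => by ring
    rw [tsum_congr hcong]
    have hgeq : (fun k => ‖w k * (a k y - b k y)‖) = fun k => g k y := by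
      funext k; rw [Real.norm_eq_abs, abs_mul, abs_of_nonneg (hw0 k)]
    calc |∑' k, w k * (a k y - b k y)| = ‖∑' k, w k * (a k y - b k y)‖ :=
          (Real.norm_eq_abs _).symm
    _ ≤ ∑' k, ‖w k * (a k y - b k y)‖ := norm_tsum_le_tsum_norm (hgeq ▸ h1k y)
    _ = ∑' k, g k y := by rw [tsum_congr fun k => congrFun hgeq k]
  calc l1dist (fun y => ∑' k, w k * a k y) (fun y => ∑' k, w k * b k y)
      = ∑' y, |(∑' k, w k * a k y) - ∑' k, w k * b k y| := rfl
  _ ≤ ∑' y, ∑' k, g k y :=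
      Summable.tsum_le_tsum habs (summable_abs_sub (mix_isProb hw0 hw ha) (mix_isProb hw0 hw hb))
        (summable_snd_of_nonneg h0 h1 h2)
  _ = ∑' k, ∑' y, g k y := tsum_comm_nonneg h0 h1 h2
  _ = ∑' k, w k * l1dist (a k) (b k) := tsum_congr h1'

lemma l1dist_mconv_le {μ : X → ℝ} {F : X → X → ℝ} {h : X → ℝ} (hμ : IsProb μ)
    (hF : ∀ z, IsProb (F z)) (hh : IsProb h) :
    l1dist (mconv μ F) h ≤ ∑' z, μ z * l1dist (F z) h := by
  have hrw : h = fun y => ∑' z, μ z * h y := by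
    funext y; rw [tsum_mul_right, hμ.2.tsum_eq, one_mul]
  calc l1dist (mconv μ F) h
      = l1dist (fun y => ∑' z, μ z * F z y) (fun y => ∑' z, μ z * h y) := by rw [← hrw]; rfl
  _ ≤ ∑' z, μ z * l1dist (F z) h := l1dist_mix_le hμ.1 hμ.2 hF (fun _ => hh)

lemma l1dist_mconv_le_l1dist {μ ν : X → ℝ} {F : X → X → ℝ} (hμ : IsProb μ) (hν : IsProb ν)
    (hF : ∀ z, IsProb (F z)) :
    l1dist (mconv μ F) (mconv ν F) ≤ l1dist μ ν := by
  set g : X → X → ℝ := fun z y => |μ z - ν z| * F z y with hg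
  have h0 : ∀ z y, 0 ≤ g z y := fun z y => mul_nonneg (abs_nonneg _) ((hF z).1 y)
  have h1 : ∀ z, Summable (g z) := fun z => (hF z).2.summable.mul_left _
  have h1' : ∀ z, ∑' y, g z y = |μ z - ν z| := by
    intro z; rw [tsum_mul_left, (hF z).2.tsum_eq, mul_one]
  have h2 : Summable fun z => ∑' y, g z y := by
    rw [show (fun z => ∑' y, g z y) = fun z => |μ z - ν z| from funext h1']
    exact summable_abs_sub hμ hν
  have hsuma : ∀ y, Summable fun z => μ z * F z y := by
    intro y
    refine Summable.of_nonneg_of_le (fun z => mul_nonneg (hμ.1 z) ((hF z).1 y))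
      (fun z => ?_) hμ.2.summable
    exact mul_le_of_le_one_right (hμ.1 z) (isProb_le_one (hF z) y)
  have hsumb : ∀ y, Summable fun z => ν z * F z y := by
    intro y
    refine Summable.of_nonneg_of_le (fun z => mul_nonneg (hν.1 z) ((hF z).1 y))
      (fun z => ?_) hν.2.summable
    exact mul_le_of_le_one_right (hν.1 z) (isProb_le_one (hF z) y)
  have h1k : ∀ y, Summable fun z => g z y := by
    intro y
    refine Summable.of_nonneg_of_le (fun z => h0 z y) (fun z => ?_) (summable_abs_sub hμ hν)
    exact mul_le_of_le_one_right (abs_nonneg _) (isProb_le_one (hF z) y)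
  have habs : ∀ y, |mconv μ F y - mconv ν F y| ≤ ∑' z, g z y := by
    intro y
    show |(∑' z, μ z * F z y) - ∑' z, ν z * F z y| ≤ _
    rw [← Summable.tsum_sub (hsuma y) (hsumb y)]
    rw [tsum_congr (fun z => (sub_mul (μ z) (ν z) (F z y)).symm)]
    have hgeq : (fun z => ‖(μ z - ν z) * F z y‖) = fun z => g z y := by
      funext z; rw [Real.norm_eq_abs, abs_mul, abs_of_nonneg ((hF z).1 y)]
    calc |∑' z, (μ z - ν z) * F z y| = ‖∑' z, (μ z - ν z) * F z y‖ := (Real.norm_eq_abs _).symm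
    _ ≤ ∑' z, ‖(μ z - ν z) * F z y‖ := norm_tsum_le_tsum_norm (hgeq ▸ h1k y)
    _ = ∑' z, g z y := by rw [tsum_congr fun z => congrFun hgeq z]
  calc l1dist (mconv μ F) (mconv ν F) = ∑' y, |mconv μ F y - mconv ν F y| := rfl
  _ ≤ ∑' y, ∑' z, g z y :=
      Summable.tsum_le_tsum habs (summable_abs_sub (mconv_isProb hμ hF) (mconv_isProb hν hF))
        (summable_snd_of_nonneg h0 h1 h2)
  _ = ∑' z, ∑' y, g z y := tsum_comm_nonneg h0 h1 h2
  _ = l1dist μ ν := tsum_congr h1'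

lemma l1dist_mconv_couple {μ ν : X → ℝ} {F : X → X → ℝ} {C : ℝ} (hμ : IsProb μ) (hν : IsProb ν)
    (hF : ∀ z, IsProb (F z)) (hC : 0 ≤ C)
    (h : ∀ z w, μ z ≠ 0 → ν w ≠ 0 → l1dist (F z) (F w) ≤ C) :
    l1dist (mconv μ F) (mconv ν F) ≤ C := by
  have hmc := mconv_isProb hν hF
  have inner : ∀ z, μ z ≠ 0 → l1dist (F z) (mconv ν F) ≤ C := by
    intro z hz
    rw [l1dist_comm]
    calc l1dist (mconv ν F) (F z) ≤ ∑' w, ν w * l1dist (F w) (F z) :=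
          l1dist_mconv_le hν hF (hF z)
    _ ≤ ∑' w, ν w * C := by
        refine Summable.tsum_le_tsum (fun w => ?_) ?_ (hν.2.summable.mul_right C)
        · rcases eq_or_ne (ν w) 0 with h0 | h0
          · simp [h0]
          · exact mul_le_mul_of_nonneg_left (by rw [l1dist_comm]; exact h z w hz h0) (hν.1 w)
        · refine Summable.of_nonneg_of_le (fun w => mul_nonneg (hν.1 w) l1dist_nonneg)
            (fun w => ?_) (hν.2.summable.mul_right 2)
          exact mul_le_mul_of_nonneg_left (l1dist_le_two (hF w) (hF z)) (hν.1 w)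
    _ = C := by rw [tsum_mul_right, hν.2.tsum_eq, one_mul]
  calc l1dist (mconv μ F) (mconv ν F) ≤ ∑' z, μ z * l1dist (F z) (mconv ν F) :=
        l1dist_mconv_le hμ hF hmc
  _ ≤ ∑' z, μ z * C := by
      refine Summable.tsum_le_tsum (fun z => ?_) ?_ (hμ.2.summable.mul_right C)
      · rcases eq_or_ne (μ z) 0 with h0 | h0
        · simp [h0]
        · exact mul_le_mul_of_nonneg_left (inner z h0) (hμ.1 z)
      · refine Summable.of_nonneg_of_le (fun z => mul_nonneg (hμ.1 z) l1dist_nonneg)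
          (fun z => ?_) (hμ.2.summable.mul_right 2)
        exact mul_le_mul_of_nonneg_left (l1dist_le_two (hF z) hmc) (hμ.1 z)
  _ = C := by rw [tsum_mul_right, hμ.2.tsum_eq, one_mul]

end Aux3
section Aux4
variable {X : Type*} [DecidableEq X]

lemma delta_isProb (x : X) : IsProb (fun y => if x = y then (1:ℝ) else 0) := by
  constructor
  · intro y; dsimp only; split <;> norm_num
  · have : (fun y => if x = y then (1:ℝ) else 0) = fun y => if y = x then 1 else 0 := by
      funext y; simp [eq_comm]
    rw [this]; exact hasSum_ite_eq x 1

lemma kpow_isProb {P : X → X → ℝ} (hP : IsTransProb P) : ∀ j x, IsProb (kpow P j x) := by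
  intro j
  induction j with
  | zero => intro x; exact delta_isProb x
  | succ j ih => intro x; exact mconv_isProb (ih x) hP

lemma kpow_succ_left {P : X → X → ℝ} (hP : IsTransProb P) (j : ℕ) (x : X) : ∀ y : X,
    kpow P (j+1) x y = ∑' z, P x z * kpow P j z y := by
  induction j with
  | zero =>
    intro y
    show ∑' z, (if x = z then (1:ℝ) else 0) * P z y = ∑' z, P x z * (if z = y then 1 else 0)
    rw [tsum_eq_single x (by intro z hz; simp [Ne.symm hz]),
        tsum_eq_single y (by intro z hz; simp [hz])]
    simp
  | succ j ih =>
    intro y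
    have hkj := kpow_isProb hP j
    have hkj1 := kpow_isProb hP (j+1)
    set G : X → X → ℝ := fun u z => (P x u * kpow P j u z) * P z y with hG
    have h0 : ∀ u z, 0 ≤ G u z := fun u z =>
      mul_nonneg (mul_nonneg ((hP x).1 u) ((hkj u).1 z)) ((hP z).1 y)
    have h1 : ∀ u, Summable (G u) := by
      intro u
      refine Summable.of_nonneg_of_le (h0 u) (fun z => ?_) ((hkj u).2.summable.mul_left (P x u))
      simp only [hG]
      rw [mul_assoc]
      exact mul_le_mul_of_nonneg_left
        (mul_le_of_le_one_right ((hkj u).1 z) (isProb_le_one (hP z) y)) ((hP x).1 u)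
    have hGsum : ∀ u, ∑' z, G u z = P x u * kpow P (j+1) u y := by
      intro u
      have : ∀ z, G u z = P x u * (kpow P j u z * P z y) := fun z => by rw [hG]; ring
      rw [tsum_congr this, tsum_mul_left]
      rfl
    have h2 : Summable fun u => ∑' z, G u z := by
      refine Summable.of_nonneg_of_le (fun u => tsum_nonneg (h0 u)) (fun u => ?_)
        (hP x).2.summable
      rw [hGsum u]
      exact mul_le_of_le_one_right ((hP x).1 u) (isProb_le_one (hkj1 u) y)
    show ∑' z, kpow P (j+1) x z * P z y = _
    calc ∑' z, kpow P (j+1) x z * P z y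
        = ∑' z, (∑' u, P x u * kpow P j u z) * P z y := tsum_congr fun z => by rw [ih z]
    _ = ∑' z, ∑' u, G u z := tsum_congr fun z => tsum_mul_right.symm
    _ = ∑' u, ∑' z, G u z := tsum_comm_nonneg h0 h1 h2
    _ = ∑' u, P x u * kpow P (j+1) u y := tsum_congr hGsum

lemma kpow_mix {w : ℕ → ℝ} {ψ : ℕ → X → X → ℝ} (hw0 : ∀ k, 0 ≤ w k)
    (hw : HasSum w 1) (hψ : ∀ k, IsTransProb (ψ k)) (j : ℕ) (x y : X) :
    kpow (fun x z => ∑' k, w k * ψ k x z) (j+1) x y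
      = ∑' k, w k * mconv (ψ k x) (kpow (fun x z => ∑' k, w k * ψ k x z) j) y := by
  set P : X → X → ℝ := fun x z => ∑' k, w k * ψ k x z with hPdef
  have hP : IsTransProb P := fun x => mix_isProb hw0 hw (fun k => hψ k x)
  have hFj := kpow_isProb hP j
  set F := kpow P j with hF
  set G : ℕ → X → ℝ := fun k z => (w k * ψ k x z) * F z y with hG
  have h0 : ∀ k z, 0 ≤ G k z := fun k z =>
    mul_nonneg (mul_nonneg (hw0 k) ((hψ k x).1 z)) ((hFj z).1 y)
  have h1 : ∀ k, Summable (G k) := by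
    intro k
    refine Summable.of_nonneg_of_le (h0 k) (fun z => ?_) ((hψ k x).2.summable.mul_left (w k))
    simp only [hG]
    rw [mul_assoc]
    exact mul_le_mul_of_nonneg_left
      (mul_le_of_le_one_right ((hψ k x).1 z) (isProb_le_one (hFj z) y)) (hw0 k)
  have hGsum : ∀ k, ∑' z, G k z = w k * mconv (ψ k x) F y := by
    intro k
    have : ∀ z, G k z = w k * (ψ k x z * F z y) := fun z => by rw [hG]; ring
    rw [tsum_congr this, tsum_mul_left]
    rfl
  have h2 : Summable fun k => ∑' z, G k z := by
    refine Summable.of_nonneg_of_le (fun k => tsum_nonneg (h0 k)) (fun k => ?_) hw.summable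
    rw [hGsum k]
    exact mul_le_of_le_one_right (hw0 k)
      (isProb_le_one (mconv_isProb (hψ k x) hFj) y)
  rw [kpow_succ_left hP j x y]
  calc ∑' z, P x z * F z y = ∑' z, ∑' k, G k z := tsum_congr fun z => tsum_mul_right.symm
  _ = ∑' k, ∑' z, G k z := tsum_comm_nonneg h0 h1 h2
  _ = ∑' k, w k * mconv (ψ k x) F y := tsum_congr hGsum

end Aux4
/-- Bounded geometry: every ball of a given radius has uniformly bounded (finite) cardinality. -/
def BoundedGeometry (X : Type*) [MetricSpace X] : Prop :=
  ∀ C : ℝ, 0 < C → ∃ M : ℕ, ∀ x : X, (Metric.ball x C).Finite ∧ (Metric.ball x C).ncard ≤ M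

theorem stmt2 (X : Type*) [MetricSpace X] [Countable X] [DiscreteTopology X] [DecidableEq X]
    (hBG : BoundedGeometry X)
    (φ : ℕ → X → X → ℝ) (hφ : ∀ n, IsTransProb (φ n))
    (hsupp : ∀ n : ℕ, ∃ R : ℝ, 0 < R ∧ ∀ x y : X, φ n x y ≠ 0 → y ∈ Metric.ball x R)
    (hlim : ∀ K : ℝ, 0 < K → ∀ ε : ℝ, 0 < ε → ∃ N : ℕ, ∀ n ≥ N, ∀ x y : X, dist x y < K →
      l1dist (φ n x) (φ n y) < ε) :
    ∃ P : X → X → ℝ, IsTransProb P ∧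
      (∀ δ : ℝ, 0 < δ → ∃ R : ℝ, 0 < R ∧
        ∀ x : X, 1 - δ < ∑' y : Metric.ball x R, P x (y : X)) ∧
      (∀ K : ℝ, 0 < K → ∀ ε : ℝ, 0 < ε → ∃ N : ℕ, ∀ n ≥ N, ∀ x y : X, dist x y < K →
        l1dist (kpow P n x) (kpow P n y) < ε) := by
  classical
  set w : ℕ → ℝ := fun k => (2⁻¹ : ℝ)^(k+1) with hwdef
  have hw0 : ∀ k, 0 ≤ w k := fun k => by positivity
  have hg : HasSum (fun n : ℕ => (2⁻¹:ℝ) ^ n) 2 := by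
    have h := hasSum_geometric_two
    rw [one_div] at h
    exact h
  have hwsum : HasSum w 1 := by
    have h2 := hg.mul_right 2⁻¹
    norm_num at h2
    simpa [hwdef, pow_succ] using h2
  have hwpart : ∀ m : ℕ, ∑ k ∈ Finset.range m, w k = 1 - (2⁻¹:ℝ)^m := by
    intro m
    induction m with
    | zero => simp
    | succ m ih =>
      rw [Finset.sum_range_succ, ih]
      simp only [hwdef, pow_succ]
      ring
  -- recursive choice of a subsequence
  have hchoice : ∀ (T : ℝ) (k : ℕ), ∃ (N : ℕ) (R : ℝ), 0 < R ∧
      (∀ x y : X, φ N x y ≠ 0 → dist y x < R) ∧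
      (∀ x y : X, dist x y < max 1 ((k+1 : ℝ) + 4^(k+2) * (1+T)) →
        l1dist (φ N x) (φ N y) < (2⁻¹:ℝ)^(k+1)) := by
    intro T k
    obtain ⟨N, hN⟩ := hlim (max 1 ((k+1 : ℝ) + 4^(k+2) * (1+T)))
      (lt_of_lt_of_le zero_lt_one (le_max_left _ _)) ((2⁻¹:ℝ)^(k+1)) (by positivity)
    obtain ⟨R, hR, hRs⟩ := hsupp N
    refine ⟨N, R, hR, fun x y h => ?_, fun x y h => hN N le_rfl x y h⟩
    simpa [Metric.mem_ball] using hRs x y h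
  choose pickN pickR hRpos hsupp' hflat using hchoice
  set T : ℕ → ℝ := fun k => Nat.rec (pickR 0 0) (fun k Tk => Tk + pickR Tk (k+1)) k with hTdef
  set Tp : ℕ → ℝ := fun k => Nat.rec 0 (fun k _ => T k) k with hTpdef
  set R : ℕ → ℝ := fun k => pickR (Tp k) k with hRdef
  set nn : ℕ → ℕ := fun k => pickN (Tp k) k with hndef
  have hTrec : ∀ k, T k = Tp k + R k := by
    intro k
    cases k with
    | zero => show pickR 0 0 = 0 + pickR 0 0; rw [zero_add]
    | succ k => rfl
  have hRpos' : ∀ k, 0 < R k := fun k => hRpos _ _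
  have hTp0 : ∀ k, 0 ≤ Tp k := by
    intro k
    induction k with
    | zero => exact le_refl 0
    | succ k ih =>
      show (0:ℝ) ≤ T k
      rw [hTrec k]
      have := hRpos' k
      linarith
  have hTpstep : ∀ k, Tp k ≤ Tp (k+1) := by
    intro k
    show Tp k ≤ T k
    rw [hTrec k]
    have := hRpos' k
    linarith
  have hTpmono : ∀ {k l : ℕ}, k ≤ l → Tp k ≤ Tp l := fun {k l} h =>
    monotone_nat_of_le_succ hTpstep h
  have hRleTp : ∀ {k m : ℕ}, k < m → R k ≤ Tp m := by
    intro k m hkm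
    have h1 : R k ≤ Tp (k+1) := by
      show R k ≤ T k
      rw [hTrec k]
      have := hTp0 k
      linarith
    exact h1.trans (hTpmono hkm)
  set S : ℕ → ℝ := fun k => max 1 ((k+1 : ℝ) + 4^(k+2) * (1 + Tp k)) with hSdef
  have hSmono : ∀ {k l : ℕ}, k ≤ l → S k ≤ S l := by
    intro k l h
    apply max_le_max le_rfl
    have h1 : ((k:ℝ)+1) ≤ (l:ℝ)+1 := by
      have : (k:ℝ) ≤ l := by exact_mod_cast h
      linarith
    have h2 : (4:ℝ)^(k+2) ≤ 4^(l+2) := by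
      apply pow_le_pow_right₀ (by norm_num)
      omega
    have h3 : 1 + Tp k ≤ 1 + Tp l := by linarith [hTpmono h]
    have h4 : (0:ℝ) ≤ 1 + Tp k := by linarith [hTp0 k]
    have h5 : (0:ℝ) ≤ (4:ℝ)^(k+2) := by positivity
    nlinarith
  have hsupp2 : ∀ k (x y : X), φ (nn k) x y ≠ 0 → dist y x < R k := fun k => hsupp' _ _
  have hflat2 : ∀ k (x y : X), dist x y < S k →
      l1dist (φ (nn k) x) (φ (nn k) y) < (2⁻¹:ℝ)^(k+1) := fun k => hflat _ _
  set P : X → X → ℝ := fun x z => ∑' k, w k * φ (nn k) x z with hPdef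
  have hψ : ∀ k, IsTransProb (φ (nn k)) := fun k => hφ (nn k)
  have hP : IsTransProb P := fun x => mix_isProb hw0 hwsum (fun k => hψ k x)
  refine ⟨P, hP, ?_, ?_⟩
  · -- part (1)
    intro δ hδ
    obtain ⟨m, hm⟩ := exists_pow_lt_of_lt_one hδ (by norm_num : (2⁻¹:ℝ) < 1)
    refine ⟨Tp m + 1, by linarith [hTp0 m], fun x => ?_⟩
    have hsub : ∀ k, k < m → ∑' (y : Metric.ball x (Tp m + 1)), φ (nn k) x y = 1 := by
      intro k hk
      rw [tsum_subtype_eq_of_support_subset ?_]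
      · exact isProb_tsum (hψ k x)
      · intro y hy
        rw [Metric.mem_ball]
        calc dist y x < R k := hsupp2 k x y hy
        _ ≤ Tp m := hRleTp hk
        _ < Tp m + 1 := by linarith
    have hPsub : Summable fun y : Metric.ball x (Tp m + 1) => P x (y:X) :=
      (hP x).2.summable.subtype _
    have hwφsum : ∀ k, Summable fun y : Metric.ball x (Tp m + 1) => w k * φ (nn k) x (y:X) :=
      fun k => (((hψ k x).2.summable).mul_left (w k)).subtype _
    have key : ∑ k ∈ Finset.range m, w k ≤ ∑' (y : Metric.ball x (Tp m + 1)), P x (y:X) := by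
      have hpart : ∀ y : Metric.ball x (Tp m + 1),
          ∑ k ∈ Finset.range m, w k * φ (nn k) x (y:X) ≤ P x (y:X) := by
        intro y
        apply Summable.sum_le_tsum (Finset.range m)
          (fun k _ => mul_nonneg (hw0 k) ((hψ k x).1 (y:X)))
        refine Summable.of_nonneg_of_le (fun k => mul_nonneg (hw0 k) ((hψ k x).1 (y:X)))
          (fun k => ?_) hwsum.summable
        exact mul_le_of_le_one_right (hw0 k) (isProb_le_one (hψ k x) (y:X))
      calc ∑ k ∈ Finset.range m, w k
          = ∑ k ∈ Finset.range m, w k * ∑' (y : Metric.ball x (Tp m + 1)), φ (nn k) x (y:X) := by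
            refine Finset.sum_congr rfl fun k hk => ?_
            rw [hsub k (Finset.mem_range.mp hk), mul_one]
      _ = ∑ k ∈ Finset.range m, ∑' (y : Metric.ball x (Tp m + 1)), w k * φ (nn k) x (y:X) := by
            refine Finset.sum_congr rfl fun k _ => ?_
            rw [tsum_mul_left]
      _ = ∑' (y : Metric.ball x (Tp m + 1)), ∑ k ∈ Finset.range m, w k * φ (nn k) x (y:X) :=
            (Summable.tsum_finsetSum fun k _ => hwφsum k).symm
      _ ≤ ∑' (y : Metric.ball x (Tp m + 1)), P x (y:X) := by
            refine Summable.tsum_le_tsum hpart ?_ hPsub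
            exact summable_sum fun k _ => hwφsum k
    calc 1 - δ < 1 - (2⁻¹:ℝ)^m := by linarith
    _ = ∑ k ∈ Finset.range m, w k := (hwpart m).symm
    _ ≤ _ := key
  · -- part (2)
    have MAIN : ∀ (m j : ℕ) (x y : X), dist x y + 2*(j:ℝ)*(Tp m) < S m →
        l1dist (kpow P j x) (kpow P j y)
          ≤ 2*(1 - (2⁻¹:ℝ)^m)^j + (2⁻¹:ℝ)^m * (1 - (1 - (2⁻¹:ℝ)^m)^j) := by
      intro m j
      induction j with
      | zero =>
        intro x y _
        simpa using l1dist_le_two (kpow_isProb hP 0 x) (kpow_isProb hP 0 y)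
      | succ j ih =>
        intro x y hd
        set s := (2⁻¹:ℝ)^m with hsdef
        set q := 1 - s with hqdef
        have hs0 : 0 < s := by positivity
        have hs1 : s ≤ 1 := pow_le_one₀ (by norm_num) (by norm_num)
        have hq0 : 0 ≤ q := by rw [hqdef]; linarith
        have hq1 : q ≤ 1 := by rw [hqdef]; linarith
        have hqj1 : q^j ≤ 1 := pow_le_one₀ hq0 hq1
        have hqj0 : 0 ≤ q^j := pow_nonneg hq0 j
        set F := kpow P j with hFdef
        have hFp := kpow_isProb hP j
        set B := 2*q^j + s*(1-q^j) with hB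
        have hB0 : 0 ≤ B := by rw [hB]; nlinarith
        set D : ℕ → ℝ := fun k => l1dist (mconv (φ (nn k) x) F) (mconv (φ (nn k) y) F) with hD
        have hD0 : ∀ k, 0 ≤ D k := fun k => l1dist_nonneg
        have hD2 : ∀ k, D k ≤ 2 := fun k =>
          l1dist_le_two (mconv_isProb (hψ k x) hFp) (mconv_isProb (hψ k y) hFp)
        have hsumD : Summable fun k => w k * D k := by
          refine Summable.of_nonneg_of_le (fun k => mul_nonneg (hw0 k) (hD0 k)) (fun k => ?_)
            (hwsum.summable.mul_right 2)
          exact mul_le_mul_of_nonneg_left (hD2 k) (hw0 k)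
        have hdec : l1dist (kpow P (j+1) x) (kpow P (j+1) y) ≤ ∑' k, w k * D k := by
          have hxrw : kpow P (j+1) x = fun y' => ∑' k, w k * mconv (φ (nn k) x) F y' :=
            funext fun y' => kpow_mix hw0 hwsum hψ j x y'
          have hyrw : kpow P (j+1) y = fun y' => ∑' k, w k * mconv (φ (nn k) y) F y' :=
            funext fun y' => kpow_mix hw0 hwsum hψ j y y'
          rw [hxrw, hyrw]
          exact l1dist_mix_le hw0 hwsum (fun k => mconv_isProb (hψ k x) hFp)
            (fun k => mconv_isProb (hψ k y) hFp)
        have hsplit : ∑' k, w k * D k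
            = ∑ k ∈ Finset.range m, w k * D k + ∑' k, w (k+m) * D (k+m) :=
          (Summable.sum_add_tsum_nat_add m hsumD).symm
        have hfin : ∑ k ∈ Finset.range m, w k * D k ≤ q * B := by
          have hstep : ∀ k ∈ Finset.range m, w k * D k ≤ w k * B := by
            intro k hk
            refine mul_le_mul_of_nonneg_left ?_ (hw0 k)
            refine l1dist_mconv_couple (hψ k x) (hψ k y) hFp hB0 ?_
            intro z w' hz hw'
            refine ih z w' ?_
            have h1 : dist z x < R k := hsupp2 k x z hz
            have h2 : dist w' y < R k := hsupp2 k y w' hw'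
            have hRk : R k ≤ Tp m := hRleTp (Finset.mem_range.mp hk)
            have ht : dist z w' ≤ dist z x + dist x y + dist y w' := dist_triangle4 z x y w'
            have hcy : dist y w' = dist w' y := dist_comm y w'
            have hcast : (2:ℝ)*((j:ℝ)+1)*(Tp m) = 2*(j:ℝ)*(Tp m) + 2*(Tp m) := by ring
            push_cast at hd ⊢
            linarith
          calc ∑ k ∈ Finset.range m, w k * D k ≤ ∑ k ∈ Finset.range m, w k * B :=
                Finset.sum_le_sum hstep
          _ = (∑ k ∈ Finset.range m, w k) * B := (Finset.sum_mul _ _ _).symm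
          _ = q * B := by rw [hwpart m]
        have hdxy : dist x y < S m := by
          have h2T : (0:ℝ) ≤ 2*((j:ℝ)+1)*(Tp m) := by
            have := hTp0 m
            positivity
          push_cast at hd
          linarith
        have htail : ∑' k, w (k+m) * D (k+m) ≤ s*s := by
          have hbound : ∀ k, w (k+m) * D (k+m) ≤ w (k+m) * w (k+m) := by
            intro k
            refine mul_le_mul_of_nonneg_left ?_ (hw0 _)
            calc D (k+m) ≤ l1dist (φ (nn (k+m)) x) (φ (nn (k+m)) y) :=
                  l1dist_mconv_le_l1dist (hψ _ x) (hψ _ y) hFp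
            _ ≤ w (k+m) := le_of_lt (hflat2 (k+m) x y
                  (lt_of_lt_of_le hdxy (hSmono (Nat.le_add_left m k))))
          have hsum1 : Summable fun k => w (k+m) * D (k+m) :=
            (summable_nat_add_iff m).mpr hsumD
          have hww : Summable fun k => w k * w k := by
            refine Summable.of_nonneg_of_le (fun k => mul_nonneg (hw0 k) (hw0 k)) (fun k => ?_)
              hwsum.summable
            exact mul_le_of_le_one_right (hw0 k) (pow_le_one₀ (by norm_num) (by norm_num))
          have hsum2 : Summable fun k => w (k+m) * w (k+m) :=
            (summable_nat_add_iff m).mpr hww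
          have heq : ∀ k, w (k+m) * w (k+m) = (4⁻¹:ℝ)^k * (4⁻¹:ℝ)^(m+1) := by
            intro k
            calc w (k+m) * w (k+m) = ((2⁻¹:ℝ)*(2⁻¹))^(k+m+1) := by
                  simp only [hwdef]; rw [mul_pow]
            _ = (4⁻¹:ℝ)^(k+m+1) := by norm_num
            _ = (4⁻¹:ℝ)^k * (4⁻¹:ℝ)^(m+1) := by rw [← pow_add]; congr 1
          calc ∑' k, w (k+m) * D (k+m) ≤ ∑' k, w (k+m) * w (k+m) :=
                Summable.tsum_le_tsum hbound hsum1 hsum2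
          _ = (∑' k, (4⁻¹:ℝ)^k) * (4⁻¹:ℝ)^(m+1) := by rw [tsum_congr heq, tsum_mul_right]
          _ = (1-4⁻¹:ℝ)⁻¹ * (4⁻¹:ℝ)^(m+1) := by
                rw [tsum_geometric_of_lt_one (by norm_num) (by norm_num)]
          _ ≤ (4⁻¹:ℝ)^m := by
                rw [pow_succ]
                have h4 : (0:ℝ) ≤ (4⁻¹:ℝ)^m := by positivity
                nlinarith
          _ = s*s := by rw [hsdef, ← mul_pow]; norm_num
        have hkey : q * B + s * s = 2*q^(j+1) + s*(1 - q^(j+1)) := by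
          simp only [hB, hqdef, pow_succ]
          ring
        calc l1dist (kpow P (j+1) x) (kpow P (j+1) y) ≤ ∑' k, w k * D k := hdec
        _ = ∑ k ∈ Finset.range m, w k * D k + ∑' k, w (k+m) * D (k+m) := hsplit
        _ ≤ q*B + s*s := add_le_add hfin htail
        _ = 2*q^(j+1) + s*(1-q^(j+1)) := hkey
    intro K hK ε hε
    obtain ⟨M₁, hM₁⟩ := exists_pow_lt_of_lt_one (show (0:ℝ) < ε/3 by linarith)
      (by norm_num : (2⁻¹:ℝ) < 1)
    set M := max M₁ ⌈K⌉₊ with hMdef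
    refine ⟨4^(M+1), fun n hn x y hxy => ?_⟩
    have hn0 : n ≠ 0 := by
      have : 0 < 4^(M+1) := Nat.pow_pos (by norm_num)
      omega
    set m := Nat.log 4 n with hm
    have h4m : 4^m ≤ n := Nat.pow_log_le_self 4 hn0
    have hlt : n < 4^(m+1) := Nat.lt_pow_succ_log_self (by norm_num) n
    have hMm : M + 1 ≤ m := (Nat.le_log_iff_pow_le (by norm_num) hn0).mpr hn
    have hcond : dist x y + 2*(n:ℝ)*(Tp m) < S m := by
      have hKm : K ≤ (M:ℝ) := by
        calc K ≤ (⌈K⌉₊ : ℝ) := Nat.le_ceil K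
        _ ≤ (M:ℝ) := by exact_mod_cast le_max_right M₁ ⌈K⌉₊
      have hMmR : (M:ℝ) ≤ (m:ℝ) := by exact_mod_cast (by omega : M ≤ m)
      have h1 : dist x y < (m:ℝ)+1 := by linarith
      have h2 : (n:ℝ) ≤ 4^(m+1) := by exact_mod_cast hlt.le
      have hTp := hTp0 m
      have h44 : (2:ℝ) * 4^(m+1) ≤ 4^(m+2) := by
        have e : (4:ℝ)^(m+2) = 4^(m+1)*4 := by ring
        nlinarith [pow_pos (show (0:ℝ) < 4 by norm_num) (m+1)]
      have h3 : 2*(n:ℝ)*(Tp m) ≤ 4^(m+2)*(Tp m) := by nlinarith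
      have : dist x y + 2*(n:ℝ)*(Tp m) < ((m:ℝ)+1) + 4^(m+2)*(1+Tp m) := by nlinarith
      exact lt_of_lt_of_le this (le_max_right _ _)
    have hmain := MAIN m n x y hcond
    set s := (2⁻¹:ℝ)^m with hsdef
    have hs0 : 0 < s := by positivity
    have hs1 : s ≤ 1 := pow_le_one₀ (by norm_num) (by norm_num)
    have hq : (1 - s)^n ≤ s := by
      have h1 : (1:ℝ) + n*s ≤ (1+s)^n := one_add_mul_le_pow (by linarith) n
      have h2 : (1-s)^n * (1+s)^n ≤ 1 := by
        rw [← mul_pow]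
        refine pow_le_one₀ (by nlinarith) (by nlinarith)
      have h3 : (2:ℝ)^m ≤ n * s := by
        have h4n : ((4:ℝ)^m) ≤ n := by exact_mod_cast h4m
        calc (2:ℝ)^m = 4^m * (2⁻¹)^m := by rw [← mul_pow]; norm_num
        _ ≤ n * (2⁻¹)^m := mul_le_mul_of_nonneg_right h4n (by positivity)
        _ = n * s := rfl
      have h0 : (0:ℝ) ≤ (1-s)^n := pow_nonneg (by linarith) n
      have h2m : (0:ℝ) < 2^m := by positivity
      have h5 : (1-s)^n * (2:ℝ)^m ≤ 1 := by
        calc (1-s)^n * (2:ℝ)^m ≤ (1-s)^n * (1+n*s) := by nlinarith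
        _ ≤ (1-s)^n * (1+s)^n := by nlinarith
        _ ≤ 1 := h2
      have h6 : (1-s)^n ≤ ((2:ℝ)^m)⁻¹ := by
        rw [show ((2:ℝ)^m)⁻¹ = 1/2^m by ring, le_div_iff₀ h2m]
        exact h5
      calc (1-s)^n ≤ ((2:ℝ)^m)⁻¹ := h6
      _ = s := by rw [hsdef, ← inv_pow]
    have hsmall : s ≤ (2⁻¹:ℝ)^M₁ := by
      apply pow_le_pow_of_le_one (by norm_num) (by norm_num)
      omega
    have h0 : (0:ℝ) ≤ (1-s)^n := pow_nonneg (by linarith) n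
    calc l1dist (kpow P n x) (kpow P n y) ≤ 2*(1-s)^n + s*(1-(1-s)^n) := hmain
    _ ≤ 3*s := by nlinarith
    _ < ε := by nlinarith
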